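/- Let k ≥ 1 and let X be a 3k-element set partitioned into k blocks of size 3. The family of all subsets of X that intersect each block in exactly two elements is an odd-sunflower-free antichain of size 3^k. In particular, for every k ≥ 1 there exists an odd-sunflower-free family of nonempty subsets of a 3k-element set with 3^k members. -/

import Mathlib

variable {α : Type*}

/-- A family of at least two nonempty finite sets is an *odd-sunflower* if every element of
the union of its members is contained in an odd number of its members. -/
def IsOddSunflower [DecidableEq α] (F : Finset (Finset α)) : Prop :=
  2 ≤ F.card ∧ (∀ S ∈ F, S.Nonempty) ∧
    ∀ x ∈ F.sup id, Odd (F.filter (fun S => x ∈ S)).card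

/-- A family is *odd-sunflower-free* if no subfamily of it (necessarily with at least two
members) is an odd-sunflower. -/
def OddSunflowerFree [DecidableEq α] (F : Finset (Finset α)) : Prop :=
  ∀ H ⊆ F, ¬ IsOddSunflower H

/-- A nonempty family of nonempty finite sets is an *even-sunflower* if every element of
the union of its members is contained in an even number of its members. -/
def IsEvenSunflower [DecidableEq α] (F : Finset (Finset α)) : Prop :=
  F.Nonempty ∧ (∀ S ∈ F, S.Nonempty) ∧
    ∀ x ∈ F.sup id, Even (F.filter (fun S => x ∈ S)).card

/-- A family is *even-sunflower-free* if no nonempty subfamily of it is an even-sunflower. -/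
def EvenSunflowerFree [DecidableEq α] (F : Finset (Finset α)) : Prop :=
  ∀ H ⊆ F, ¬ IsEvenSunflower H

/-- A family of at least three sets is a *sunflower* if every element is contained either
in all of the sets or in at most one of them. -/
def IsSunflower [DecidableEq α] (H : Finset (Finset α)) : Prop :=
  3 ≤ H.card ∧ ∀ x : α, (∀ S ∈ H, x ∈ S) ∨ (H.filter (fun S => x ∈ S)).card ≤ 1

/-- A family of sets is an *antichain* if none of its members is a proper subset of another. -/
def IsAntichainFamily (F : Finset (Finset α)) : Prop :=
  ∀ S ∈ F, ∀ T ∈ F, S ⊆ T → S = T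

/-- An odd-sunflower is *minimal* if no proper subfamily of it is an odd-sunflower. -/
def IsMinimalOddSunflower [DecidableEq α] (F : Finset (Finset α)) : Prop :=
  IsOddSunflower F ∧ ∀ H ⊂ F, ¬ IsOddSunflower H

/-- `Cfam n` is the family of all `(n-1)`-element subsets of `{1, …, n}`. -/
def Cfam (n : ℕ) : Finset (Finset ℕ) := (Finset.Icc 1 n).powersetCard (n - 1)

/-- `CfamPlus n` is `Cfam n` together with the full set `{1, …, n}`. -/
def CfamPlus (n : ℕ) : Finset (Finset ℕ) := insert (Finset.Icc 1 n) (Cfam n)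

/-- A multifamily (multiset) of at least two nonempty finite sets is an *odd-sunflower* if
every element of the union of its members has odd degree (counted with multiplicity). -/
def MultiOddSunflower [DecidableEq α] (H : Multiset (Finset α)) : Prop :=
  2 ≤ Multiset.card H ∧ (∀ S ∈ H, S.Nonempty) ∧
    ∀ x ∈ H.sup, Odd (H.countP (fun S => x ∈ S))

/-- The wreath product of two families. -/
def Wreath {β : Type*} [DecidableEq α] [DecidableEq β]
    (F : Set (Finset α)) (G : Set (Finset β)) : Set (Finset (α × β)) :=
  {S | ∃ F₀ ∈ F, ∃ g : α → Finset β, (∀ i ∈ F₀, g i ∈ G) ∧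
    S = F₀.biUnion (fun i => ({i} : Finset α) ×ˢ g i)}

/-- Odd-sunflower-freeness for set-indexed families. -/
def OddSunflowerFreeS [DecidableEq α] (F : Set (Finset α)) : Prop :=
  ∀ H : Finset (Finset α), ↑H ⊆ F → ¬ IsOddSunflower H

/-- Antichain condition for set-indexed families. -/
def IsAntichainFamilyS (F : Set (Finset α)) : Prop :=
  ∀ S ∈ F, ∀ T ∈ F, S ⊆ T → S = T

/-- The family of all subsets of `X` meeting each block of a given partition of `X` into
`k` blocks of size `3` in exactly two elements. -/
def blockFamily {α : Type*} [DecidableEq α] (k : ℕ) (X : Finset α)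
    (B : Fin k → Finset α) : Finset (Finset α) :=
  X.powerset.filter (fun S => ∀ i, (S ∩ B i).card = 2)

section Aux
variable {α : Type*} [DecidableEq α]

lemma mem_blockFamily_iff' {k : ℕ} {X : Finset α} {B : Fin k → Finset α} {S : Finset α} :
    S ∈ blockFamily k X B ↔ S ⊆ X ∧ ∀ i, (S ∩ B i).card = 2 := by
  simp [blockFamily]

lemma decomp_blocks' {k : ℕ} {X : Finset α} {B : Fin k → Finset α}
    (hX : X = Finset.univ.biUnion B) {S : Finset α} (hS : S ⊆ X) :
    S = Finset.univ.biUnion (fun i => S ∩ B i) := by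
  ext x
  simp only [Finset.mem_biUnion, Finset.mem_inter, Finset.mem_univ, true_and]
  constructor
  · intro hx
    have hxX := hS hx
    rw [hX] at hxX
    simp only [Finset.mem_biUnion, Finset.mem_univ, true_and] at hxX
    obtain ⟨i, hi⟩ := hxX
    exact ⟨i, hx, hi⟩
  · rintro ⟨i, hx, _⟩; exact hx

lemma blockFamily_main (k : ℕ) (hk : 1 ≤ k)
    (X : Finset α) (B : Fin k → Finset α)
    (hB : ∀ i, (B i).card = 3) (hdisj : ∀ i j, i ≠ j → Disjoint (B i) (B j))
    (hX : X = Finset.univ.biUnion B) :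
    (∀ S ∈ blockFamily k X B, S.Nonempty) ∧
      IsAntichainFamily (blockFamily k X B) ∧
      OddSunflowerFree (blockFamily k X B) ∧
      (blockFamily k X B).card = 3 ^ k := by
  have hBX : ∀ i, B i ⊆ X := by
    intro i x hx
    rw [hX]
    exact Finset.mem_biUnion.2 ⟨i, Finset.mem_univ i, hx⟩
  refine ⟨?_, ?_, ?_, ?_⟩
  · -- nonempty
    intro S hS
    rw [mem_blockFamily_iff'] at hS
    have h2 := hS.2 ⟨0, hk⟩
    have : (S ∩ B ⟨0, hk⟩).Nonempty := Finset.card_pos.1 (by omega)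
    exact this.mono Finset.inter_subset_left
  · -- antichain
    intro S hS T hT hsub
    rw [mem_blockFamily_iff'] at hS hT
    rw [decomp_blocks' hX hS.1, decomp_blocks' hX hT.1]
    congr 1
    funext i
    refine Finset.eq_of_subset_of_card_le
      (Finset.inter_subset_inter hsub (Finset.Subset.refl _)) ?_
    rw [hS.2 i, hT.2 i]
  · -- odd-sunflower-free
    rintro H hH ⟨hcard2, _hne, hodd⟩
    -- degree sums over a block
    have hdegsum : ∀ i, (∑ x ∈ B i, (H.filter (fun S => x ∈ S)).card) = 2 * H.card := by
      intro i
      have : (∑ x ∈ B i, (H.filter (fun S => x ∈ S)).card)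
          = ∑ S ∈ H, ((B i).filter (fun x => x ∈ S)).card := by
        simp only [Finset.card_filter]
        exact Finset.sum_comm
      rw [this]
      have h2 : ∀ S ∈ H, ((B i).filter (fun x => x ∈ S)).card = 2 := by
        intro S hS
        have := (mem_blockFamily_iff'.1 (hH hS)).2 i
        rw [Finset.filter_mem_eq_inter, Finset.inter_comm]
        exact this
      rw [Finset.sum_congr rfl h2, Finset.sum_const, smul_eq_mul, mul_comm]
    -- each block has a zero-degree element
    have hzero : ∀ i, ∃ z ∈ B i, (H.filter (fun S => z ∈ S)).card = 0 := by
      intro i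
      by_contra hcon
      push_neg at hcon
      have hoddall : ∀ x ∈ B i, (H.filter (fun S => x ∈ S)).card % 2 = 1 := by
        intro x hx
        have hne0 := hcon x hx
        have hxsup : x ∈ H.sup id := by
          obtain ⟨S, hS⟩ := Finset.card_pos.1 (Nat.pos_of_ne_zero hne0)
          rw [Finset.mem_filter] at hS
          exact Finset.mem_sup.2 ⟨S, hS.1, hS.2⟩
        exact Nat.odd_iff.1 (hodd x hxsup)
      have : (∑ x ∈ B i, (H.filter (fun S => x ∈ S)).card) % 2 = 1 := by
        rw [Finset.sum_nat_mod, Finset.sum_congr rfl hoddall, Finset.sum_const, hB i]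
        norm_num
      rw [hdegsum i] at this
      omega
    -- any two members of H are equal
    have hall : ∀ S ∈ H, ∀ T ∈ H, S = T := by
      intro S hS T hT
      have hS' := mem_blockFamily_iff'.1 (hH hS)
      have hT' := mem_blockFamily_iff'.1 (hH hT)
      rw [decomp_blocks' hX hS'.1, decomp_blocks' hX hT'.1]
      congr 1
      funext i
      obtain ⟨z, hzB, hz0⟩ := hzero i
      have hkey : ∀ U : Finset α, U ∈ H → (∀ j, (U ∩ B j).card = 2) →
          U ∩ B i = (B i).erase z := by
        intro U hU hU2
        have hzU : z ∉ U := by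
          intro hzU
          have : U ∈ H.filter (fun S => z ∈ S) := Finset.mem_filter.2 ⟨hU, hzU⟩
          rw [Finset.card_eq_zero] at hz0
          simp [hz0] at this
        refine Finset.eq_of_subset_of_card_le ?_ ?_
        · intro x hx
          rw [Finset.mem_inter] at hx
          exact Finset.mem_erase.2 ⟨fun h => hzU (h ▸ hx.1), hx.2⟩
        · rw [Finset.card_erase_of_mem hzB, hB i, hU2 i]
      rw [hkey S hS hS'.2, hkey T hT hT'.2]
    obtain ⟨S, hS, T, hT, hST⟩ := Finset.one_lt_card.1 (by omega : 1 < H.card)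
    exact hST (hall S hS T hT)
  · -- cardinality
    have := Finset.card_nbij' (s := blockFamily k X B)
      (t := Fintype.piFinset (fun i => (B i).powersetCard 2))
      (fun S i => S ∩ B i) (fun f => Finset.univ.biUnion f)
      ?_ ?_ ?_ ?_
    · rw [this, Fintype.card_piFinset]
      simp only [Finset.card_powersetCard, hB]
      simp
    · intro S hS
      rw [Finset.mem_coe, mem_blockFamily_iff'] at hS
      rw [Finset.mem_coe, Fintype.mem_piFinset]
      intro i
      exact Finset.mem_powersetCard.2 ⟨Finset.inter_subset_right, hS.2 i⟩
    · intro f hf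
      rw [Finset.mem_coe, Fintype.mem_piFinset] at hf
      have hf' : ∀ i, f i ⊆ B i ∧ (f i).card = 2 := fun i =>
        Finset.mem_powersetCard.1 (hf i)
      have hinter : ∀ i, (Finset.univ.biUnion f) ∩ B i = f i := by
        intro i
        ext x
        simp only [Finset.mem_inter, Finset.mem_biUnion, Finset.mem_univ, true_and]
        constructor
        · rintro ⟨⟨j, hj⟩, hxB⟩
          rcases eq_or_ne j i with rfl | hne
          · exact hj
          · exact absurd hxB (Finset.disjoint_left.1 (hdisj j i hne) ((hf' j).1 hj)).elim
        · intro hx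
          exact ⟨⟨i, hx⟩, (hf' i).1 hx⟩
      rw [Finset.mem_coe, mem_blockFamily_iff']
      constructor
      · intro x hx
        rw [Finset.mem_biUnion] at hx
        obtain ⟨j, _, hj⟩ := hx
        exact hBX j ((hf' j).1 hj)
      · intro i
        rw [hinter i, (hf' i).2]
    · intro S hS
      exact (decomp_blocks' hX (mem_blockFamily_iff'.1 hS).1).symm
    · intro f hf
      rw [Finset.mem_coe, Fintype.mem_piFinset] at hf
      funext i
      ext x
      simp only [Finset.mem_inter, Finset.mem_biUnion, Finset.mem_univ, true_and]
      have hf' : ∀ j, f j ⊆ B j := fun j => (Finset.mem_powersetCard.1 (hf j)).1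
      constructor
      · rintro ⟨⟨j, hj⟩, hxB⟩
        rcases eq_or_ne j i with rfl | hne
        · exact hj
        · exact absurd hxB (Finset.disjoint_left.1 (hdisj j i hne) (hf' j hj)).elim
      · intro hx
        exact ⟨⟨i, hx⟩, hf' i hx⟩

end Aux

/-- Construction 1: for a `3k`-element set `X` partitioned into `k` blocks of size `3`, the
family of all subsets intersecting each block in exactly two elements is an
odd-sunflower-free antichain of size `3^k`.  In particular, for every `k ≥ 1` there is an
odd-sunflower-free family of `3^k` nonempty subsets of a `3k`-element set. -/
theorem blockFamily_oddSunflowerFree {α : Type*} [DecidableEq α] (k : ℕ) (hk : 1 ≤ k)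
    (X : Finset α) (B : Fin k → Finset α) (hXcard : X.card = 3 * k)
    (hB : ∀ i, (B i).card = 3) (hdisj : ∀ i j, i ≠ j → Disjoint (B i) (B j))
    (hX : X = Finset.univ.biUnion B) :
    ((∀ S ∈ blockFamily k X B, S.Nonempty) ∧
      IsAntichainFamily (blockFamily k X B) ∧
      OddSunflowerFree (blockFamily k X B) ∧
      (blockFamily k X B).card = 3 ^ k) ∧
    (∃ G : Finset (Finset ℕ), (∀ S ∈ G, S.Nonempty ∧ S ⊆ Finset.Icc 1 (3 * k)) ∧
      OddSunflowerFree G ∧ G.card = 3 ^ k) := by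
  constructor
  · exact blockFamily_main k hk X B hB hdisj hX
  · -- concrete construction over ℕ
    set Bn : Fin k → Finset ℕ := fun i => Finset.Icc (3*(i:ℕ)+1) (3*(i:ℕ)+3) with hBn
    set Xn : Finset ℕ := Finset.Icc 1 (3*k) with hXn
    have hBn3 : ∀ i, (Bn i).card = 3 := by
      intro i; simp [hBn, Nat.card_Icc]
    have hdisjn : ∀ i j, i ≠ j → Disjoint (Bn i) (Bn j) := by
      intro i j hij
      have hij' : (i:ℕ) ≠ (j:ℕ) := fun h => hij (Fin.val_injective h)
      rw [Finset.disjoint_left]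
      intro x hx hx'
      simp only [hBn, Finset.mem_Icc] at hx hx'
      omega
    have hXun : Xn = Finset.univ.biUnion Bn := by
      ext x
      simp only [hXn, hBn, Finset.mem_biUnion, Finset.mem_univ, true_and, Finset.mem_Icc]
      constructor
      · rintro ⟨h1, h2⟩
        exact ⟨⟨(x-1)/3, by omega⟩, by simp; omega, by simp; omega⟩
      · rintro ⟨i, h1, h2⟩
        have := i.isLt
        omega
    obtain ⟨hne, _, hfree, hcard⟩ := blockFamily_main k hk Xn Bn hBn3 hdisjn hXun
    refine ⟨blockFamily k Xn Bn, ?_, hfree, hcard⟩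
    intro S hS
    exact ⟨hne S hS, (mem_blockFamily_iff'.1 hS).1⟩
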